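/- Let f be nonnegative and Riemann integrable on [a,b]. Suppose d_{n,k} = O(n^p) uniformly in k for some p < 1, and K(n) = O(n^q) for some 0 < q < 1 with K(n) ≤ n. Then lim_{n→∞} Σ_{k=1}^{n−K(n)} f(a + (k/n)(b−a)) · (b−a)/(n + d_{n,k}) = ∫_a^b f(x) dx. -/

import Mathlib

open Filter Finset Real

/-- `f` is Riemann integrable on `[a,b]` with Riemann integral `I`:
for every `ε > 0` there is `δ > 0` such that every tagged partition
`a = x 0 < x 1 < … < x n = b` with mesh `< δ` and tags `ξ k ∈ [x (k-1), x k]`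
has Riemann sum within `ε` of `I`. -/
def IsRiemannIntegral (f : ℝ → ℝ) (a b I : ℝ) : Prop :=
  ∀ ε > 0, ∃ δ > 0, ∀ (n : ℕ) (x ξ : ℕ → ℝ),
    0 < n → x 0 = a → x n = b →
    (∀ k ∈ Finset.Icc 1 n, x (k - 1) < x k) →
    (∀ k ∈ Finset.Icc 1 n, x k - x (k - 1) < δ) →
    (∀ k ∈ Finset.Icc 1 n, ξ k ∈ Set.Icc (x (k - 1)) (x k)) →
    |(∑ k ∈ Finset.Icc 1 n, f (ξ k) * (x k - x (k - 1))) - I| < ε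

lemma pt_mem_Icc {a b : ℝ} (hab : a < b) {n k : ℕ} (hn : 0 < n) (hk : k ≤ n) :
    a + (k : ℝ) / n * (b - a) ∈ Set.Icc a b := by
  have hn' : (0:ℝ) < n := by exact_mod_cast hn
  have h1 : (0:ℝ) ≤ (k:ℝ)/n := by positivity
  have h2 : (k:ℝ)/n ≤ 1 := by
    rw [div_le_one hn']; exact_mod_cast hk
  constructor <;> nlinarith

lemma grid_diff {a b : ℝ} {n k : ℕ} (hn : 0 < n) (hk : 1 ≤ k) :
    (a + (k : ℝ) / n * (b - a)) - (a + ((k - 1 : ℕ) : ℝ) / n * (b - a)) = (b - a) / n := by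
  have hn' : (0:ℝ) < n := by exact_mod_cast hn
  have : ((k - 1 : ℕ) : ℝ) = (k : ℝ) - 1 := by
    push_cast [Nat.cast_sub hk]; ring
  rw [this]; field_simp; ring

lemma exists_bound (f : ℝ → ℝ) (a b I : ℝ) (hab : a < b)
    (hf : IsRiemannIntegral f a b I) (hpos : ∀ x ∈ Set.Icc a b, 0 ≤ f x) :
    ∃ M : ℝ, 0 ≤ M ∧ ∀ t ∈ Set.Icc a b, f t ≤ M := by
  obtain ⟨δ, hδ, H⟩ := hf 1 one_pos
  obtain ⟨N, hN⟩ := exists_nat_gt ((b - a) / δ)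
  set n := N + 1 with hdefn
  have hn0 : 0 < n := Nat.succ_pos N
  have hnN : (N:ℝ) ≤ (n:ℝ) := by exact_mod_cast Nat.le_succ N
  clear_value n
  have hn' : (0:ℝ) < n := by exact_mod_cast hn0
  have hba : (0:ℝ) < b - a := by linarith
  have hΔpos : 0 < (b - a) / n := div_pos hba hn'
  have hmesh : (b - a) / n < δ := by
    rw [div_lt_iff₀ hn']
    have h2 : (b - a) / δ < (n:ℝ) := lt_of_lt_of_le hN hnN
    rw [div_lt_iff₀ hδ] at h2
    linarith
  set x : ℕ → ℝ := fun k => a + (k : ℝ) / n * (b - a) with hx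
  have hxval : ∀ k : ℕ, x k = a + (k : ℝ) / n * (b - a) := fun k => rfl
  clear_value x
  have hx0 : x 0 = a := by rw [hxval]; simp
  have hxn : x n = b := by rw [hxval]; field_simp; ring
  have hxd : ∀ k ∈ Finset.Icc 1 n, x k - x (k - 1) = (b - a) / n := by
    intro k hk
    rw [hxval, hxval]
    exact grid_diff hn0 (Finset.mem_Icc.1 hk).1
  have hxlt : ∀ k ∈ Finset.Icc 1 n, x (k - 1) < x k := by
    intro k hk
    have h := hxd k hk
    linarith [hΔpos, h]
  have hxm : ∀ k ∈ Finset.Icc 1 n, x k - x (k - 1) < δ := by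
    intro k hk; rw [hxd k hk]; exact hmesh
  have hxmem : ∀ k, k ≤ n → x k ∈ Set.Icc a b := fun k hk => by
    rw [hxval]; exact pt_mem_Icc hab hn0 hk
  refine ⟨max 0 ((I + 1) / ((b - a) / n)), le_max_left _ _, fun t ht => ?_⟩
  set s : ℝ := (t - a) * n / (b - a) with hs
  clear_value s
  have hs0 : 0 ≤ s := by
    rw [hs]; exact div_nonneg (mul_nonneg (by linarith [ht.1]) hn'.le) hba.le
  have hsn : s ≤ n := by
    rw [hs, div_le_iff₀ hba]; nlinarith [ht.2, hn']
  set j : ℕ := max 1 ⌈s⌉₊ with hj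
  have hj1 : 1 ≤ j := le_max_left _ _
  have hjn : j ≤ n := max_le hn0 (Nat.ceil_le.2 (by exact_mod_cast hsn))
  have hsj : s ≤ (j : ℝ) := le_trans (Nat.le_ceil s) (by exact_mod_cast le_max_right 1 ⌈s⌉₊)
  have hjs : (j : ℝ) - 1 ≤ s := by
    rcases Nat.eq_zero_or_pos ⌈s⌉₊ with h0 | h0
    · have : j = 1 := by simp [hj, h0]
      rw [this]; simpa using hs0
    · have he : j = ⌈s⌉₊ := max_eq_right h0
      rw [he]
      have := Nat.ceil_lt_add_one hs0
      linarith
  have hsba : s * (b - a) = (t - a) * n := by rw [hs, div_mul_cancel₀ _ hba.ne']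
  have hxj1 : x (j - 1) ≤ t := by
    have hc : ((j - 1 : ℕ) : ℝ) = (j : ℝ) - 1 := by push_cast [Nat.cast_sub hj1]; ring
    rw [hxval]
    rw [hc]
    have key : ((j:ℝ) - 1) * (b - a) ≤ (t - a) * n := by
      have h := mul_le_mul_of_nonneg_right hjs (le_of_lt hba)
      linarith [hsba]
    have h2 : ((j:ℝ) - 1) / n * (b - a) ≤ t - a := by
      rw [div_mul_eq_mul_div, div_le_iff₀ hn']; linarith
    linarith
  have htxj : t ≤ x j := by
    rw [hxval]
    have key : (t - a) * n ≤ (j:ℝ) * (b - a) := by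
      have h := mul_le_mul_of_nonneg_right hsj (le_of_lt hba)
      linarith [hsba]
    have h2 : t - a ≤ (j:ℝ) / n * (b - a) := by
      rw [div_mul_eq_mul_div, le_div_iff₀ hn']; linarith
    linarith
  set ξ : ℕ → ℝ := fun k => if k = j then t else x k with hξ
  have htag : ∀ k ∈ Finset.Icc 1 n, ξ k ∈ Set.Icc (x (k - 1)) (x k) := by
    intro k hk
    simp only [hξ]
    split_ifs with h
    · subst h; exact ⟨hxj1, htxj⟩
    · refine ⟨le_of_lt (hxlt k hk), le_refl _⟩
  have habs := H n x ξ hn0 hx0 hxn hxlt hxm htag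
  have hjmem : j ∈ Finset.Icc 1 n := Finset.mem_Icc.2 ⟨hj1, hjn⟩
  have hnonneg : ∀ k ∈ Finset.Icc 1 n, 0 ≤ f (ξ k) * (x k - x (k - 1)) := by
    intro k hk
    have hkn := (Finset.mem_Icc.1 hk).2
    apply mul_nonneg
    · apply hpos
      simp only [hξ]; split_ifs with h
      · exact ht
      · exact hxmem k hkn
    · rw [hxd k hk]; positivity
  have hsingle : f t * ((b - a) / n) ≤ ∑ k ∈ Finset.Icc 1 n, f (ξ k) * (x k - x (k - 1)) := by
    have := Finset.single_le_sum hnonneg hjmem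
    have hξj : ξ j = t := by simp [hξ]
    rwa [hξj, hxd j hjmem] at this
  have hlt : f t * ((b - a) / n) < I + 1 := by
    have := (abs_lt.1 habs).2
    linarith
  have : f t ≤ (I + 1) / ((b - a) / n) := by
    rw [le_div_iff₀ hΔpos]; linarith
  exact le_trans this (le_max_right _ _)

lemma riemann_sum_tendsto (f : ℝ → ℝ) (a b I : ℝ) (hab : a < b)
    (hf : IsRiemannIntegral f a b I) :
    Tendsto (fun n : ℕ => ∑ k ∈ Finset.Icc 1 n,
      f (a + (k : ℝ) / n * (b - a)) * ((b - a) / n)) atTop (nhds I) := by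
  rw [Metric.tendsto_atTop]
  intro ε hε
  obtain ⟨δ, hδ, H⟩ := hf ε hε
  obtain ⟨N, hN⟩ := exists_nat_gt ((b - a) / δ)
  refine ⟨N + 1, fun n hn => ?_⟩
  have hn0 : 0 < n := lt_of_lt_of_le (Nat.succ_pos N) hn
  have hn' : (0:ℝ) < n := by exact_mod_cast hn0
  have hba : (0:ℝ) < b - a := by linarith
  have hmesh : (b - a) / n < δ := by
    rw [div_lt_iff₀ hn']
    have h2 : (b - a) / δ < (n:ℝ) := lt_of_lt_of_le hN (by exact_mod_cast le_trans (Nat.le_succ N) hn)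
    rw [div_lt_iff₀ hδ] at h2
    linarith
  obtain ⟨x, hxval⟩ : ∃ x : ℕ → ℝ, ∀ k : ℕ, x k = a + (k : ℝ) / n * (b - a) :=
    ⟨_, fun _ => rfl⟩
  have hxd : ∀ k ∈ Finset.Icc 1 n, x k - x (k - 1) = (b - a) / n := by
    intro k hk
    rw [hxval, hxval]
    exact grid_diff hn0 (Finset.mem_Icc.1 hk).1
  have hΔpos : 0 < (b - a) / n := div_pos hba hn'
  have hxlt : ∀ k ∈ Finset.Icc 1 n, x (k - 1) < x k := by
    intro k hk; have h := hxd k hk; linarith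
  have hxm : ∀ k ∈ Finset.Icc 1 n, x k - x (k - 1) < δ := by
    intro k hk; rw [hxd k hk]; exact hmesh
  have htag : ∀ k ∈ Finset.Icc 1 n, x k ∈ Set.Icc (x (k - 1)) (x k) :=
    fun k hk => ⟨le_of_lt (hxlt k hk), le_refl _⟩
  have habs := H n x x hn0 (by rw [hxval]; simp) (by rw [hxval]; field_simp; ring) hxlt hxm htag
  rw [Real.dist_eq]
  have heq : ∑ k ∈ Finset.Icc 1 n, f (a + (k : ℝ) / n * (b - a)) * ((b - a) / n)
      = ∑ k ∈ Finset.Icc 1 n, f (x k) * (x k - x (k - 1)) := by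
    refine Finset.sum_congr rfl fun k hk => ?_
    rw [hxd k hk, hxval]
  rw [heq]
  exact habs

theorem deleting_Kn_disturbing_mesh_bigO (f : ℝ → ℝ) (a b I : ℝ) (hab : a < b)
    (hf : IsRiemannIntegral f a b I)
    (hpos : ∀ x ∈ Set.Icc a b, 0 ≤ f x)
    (d : ℕ → ℕ → ℝ) (C p : ℝ) (hC : 0 < C) (hp : p < 1)
    (hd0 : ∀ n : ℕ, ∀ k ∈ Finset.Icc 1 n, 0 ≤ d n k)
    (hdb : ∀ n : ℕ, ∀ k ∈ Finset.Icc 1 n, d n k ≤ C * (n : ℝ) ^ p)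
    (K : ℕ → ℕ) (C' q : ℝ) (hC' : 0 < C') (hq0 : 0 < q) (hq1 : q < 1)
    (hKle : ∀ n, K n ≤ n)
    (hKb : ∀ n : ℕ, (K n : ℝ) ≤ C' * (n : ℝ) ^ q) :
    Tendsto (fun n : ℕ =>
      ∑ k ∈ Finset.Icc 1 (n - K n), f (a + (k : ℝ) / n * (b - a)) * ((b - a) / (n + d n k)))
      atTop (nhds I) := by
  obtain ⟨M, hM0, hM⟩ := exists_bound f a b I hab hf hpos
  have hptmem : ∀ {n k : ℕ}, 0 < n → k ≤ n → a + (k : ℝ) / n * (b - a) ∈ Set.Icc a b :=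
    fun hn hk => pt_mem_Icc hab hn hk
  have hS := riemann_sum_tendsto f a b I hab hf
  have hba : (0:ℝ) < b - a := by linarith
  set A : ℕ → ℝ := fun n =>
    ∑ k ∈ Finset.Icc 1 (n - K n), f (a + (k : ℝ) / n * (b - a)) * ((b - a) / (n + d n k)) with hA
  set S : ℕ → ℝ := fun n => ∑ k ∈ Finset.Icc 1 n,
      f (a + (k : ℝ) / n * (b - a)) * ((b - a) / n) with hSdef
  -- key estimates
  have key : ∀ n : ℕ, 1 ≤ n → 0 ≤ S n - A n ∧
      S n - A n ≤ M * (b - a) * (C * (n:ℝ) ^ (p - 1) + C' * (n:ℝ) ^ (q - 1)) := by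
    intro n hn1
    have hn0 : 0 < n := hn1
    have hn' : (0:ℝ) < n := by exact_mod_cast hn0
    set m := n - K n with hm
    have hmn : m ≤ n := Nat.sub_le n (K n)
    -- nonnegativity & bounds of f at sample points
    have hfmem : ∀ k ∈ Finset.Icc 1 n, f (a + (k : ℝ) / n * (b - a)) ∈ Set.Icc 0 M := by
      intro k hk
      have hk2 := (Finset.mem_Icc.1 hk).2
      exact ⟨hpos _ (hptmem hn0 hk2), hM _ (hptmem hn0 hk2)⟩
    have hsub : Finset.Icc 1 m ⊆ Finset.Icc 1 n := by
      apply Finset.Icc_subset_Icc le_rfl hmn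
    -- split S n
    have hsplit : S n = (∑ k ∈ Finset.Icc 1 m, f (a + (k : ℝ) / n * (b - a)) * ((b - a) / n))
        + ∑ k ∈ Finset.Ioc m n, f (a + (k : ℝ) / n * (b - a)) * ((b - a) / n) := by
      have hIcc : ∀ x : ℕ, Finset.Icc 1 x = Finset.Ioc 0 x := fun x => by
        rw [← Finset.Icc_add_one_left_eq_Ioc, zero_add]
      rw [hSdef]
      simp only
      rw [hIcc n, hIcc m]
      exact (Finset.sum_Ioc_consecutive _ (Nat.zero_le m) hmn).symm
    -- difference of first parts, termwise
    have hterm : ∀ k ∈ Finset.Icc 1 m,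
        0 ≤ f (a + (k : ℝ) / n * (b - a)) * ((b - a) / n)
            - f (a + (k : ℝ) / n * (b - a)) * ((b - a) / (n + d n k)) ∧
        f (a + (k : ℝ) / n * (b - a)) * ((b - a) / n)
            - f (a + (k : ℝ) / n * (b - a)) * ((b - a) / (n + d n k))
          ≤ M * ((b - a) * C * (n:ℝ) ^ p / ((n:ℝ) * (n:ℝ))) := by
      intro k hk
      have hkn := hsub hk
      obtain ⟨hf0, hfM⟩ := hfmem k hkn
      have hd0' := hd0 n k hkn
      have hdb' := hdb n k hkn
      have hnd : (0:ℝ) < (n:ℝ) + d n k := by linarith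
      have hwd : (b - a) / n - (b - a) / ((n:ℝ) + d n k)
          = (b - a) * d n k / ((n:ℝ) * ((n:ℝ) + d n k)) := by
        field_simp; ring
      have hw0 : 0 ≤ (b - a) / n - (b - a) / ((n:ℝ) + d n k) := by
        rw [hwd]; positivity
      have hrp : (0:ℝ) ≤ (n:ℝ) ^ p := by positivity
      have hwB : (b - a) / n - (b - a) / ((n:ℝ) + d n k)
          ≤ (b - a) * C * (n:ℝ) ^ p / ((n:ℝ) * (n:ℝ)) := by
        rw [hwd, div_le_div_iff₀ (by positivity) (by positivity)]
        nlinarith [mul_le_mul_of_nonneg_left hdb' (by positivity : (0:ℝ) ≤ (b - a) * ((n:ℝ) * (n:ℝ))),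
          mul_nonneg (mul_nonneg (mul_nonneg hba.le hC.le) hrp)
            (mul_nonneg hn'.le hd0')]
      constructor
      · rw [← mul_sub]; exact mul_nonneg hf0 hw0
      · rw [← mul_sub]
        exact mul_le_mul hfM hwB hw0 hM0
    -- sum of first-part differences
    have hB1 : ∑ k ∈ Finset.Icc 1 m, (f (a + (k : ℝ) / n * (b - a)) * ((b - a) / n)
          - f (a + (k : ℝ) / n * (b - a)) * ((b - a) / (n + d n k)))
        ≤ M * (b - a) * (C * (n:ℝ) ^ (p - 1)) := by
      calc _ ≤ (Finset.Icc 1 m).card • (M * ((b - a) * C * (n:ℝ) ^ p / ((n:ℝ) * (n:ℝ)))) :=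
            Finset.sum_le_card_nsmul _ _ _ (fun k hk => (hterm k hk).2)
        _ = (m : ℝ) * (M * ((b - a) * C * (n:ℝ) ^ p / ((n:ℝ) * (n:ℝ)))) := by
            rw [nsmul_eq_mul, Nat.card_Icc]; norm_num
        _ ≤ (n : ℝ) * (M * ((b - a) * C * (n:ℝ) ^ p / ((n:ℝ) * (n:ℝ)))) := by
            apply mul_le_mul_of_nonneg_right (by exact_mod_cast hmn) (by positivity)
        _ = M * (b - a) * (C * ((n:ℝ) ^ p / (n:ℝ))) := by field_simp
        _ = M * (b - a) * (C * (n:ℝ) ^ (p - 1)) := by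
            rw [rpow_sub hn', rpow_one]
    -- tail bound
    have hB2 : ∑ k ∈ Finset.Ioc m n, f (a + (k : ℝ) / n * (b - a)) * ((b - a) / n)
        ≤ M * (b - a) * (C' * (n:ℝ) ^ (q - 1)) := by
      have hIoc : ∀ k ∈ Finset.Ioc m n, f (a + (k : ℝ) / n * (b - a)) * ((b - a) / n)
          ≤ M * ((b - a) / n) := by
        intro k hk
        obtain ⟨hk1, hk2⟩ := Finset.mem_Ioc.1 hk
        have hkmem : k ∈ Finset.Icc 1 n := Finset.mem_Icc.2 ⟨le_trans (Nat.succ_le_succ (Nat.zero_le m)) hk1, hk2⟩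
        obtain ⟨hf0, hfM⟩ := hfmem k hkmem
        exact mul_le_mul_of_nonneg_right hfM (by positivity)
      calc _ ≤ (Finset.Ioc m n).card • (M * ((b - a) / n)) :=
            Finset.sum_le_card_nsmul _ _ _ hIoc
        _ = ((K n : ℝ)) * (M * ((b - a) / n)) := by
            rw [nsmul_eq_mul, Nat.card_Ioc, hm, Nat.sub_sub_self (hKle n)]
        _ ≤ (C' * (n:ℝ) ^ q) * (M * ((b - a) / n)) := by
            apply mul_le_mul_of_nonneg_right (hKb n) (by positivity)
        _ = M * (b - a) * (C' * ((n:ℝ) ^ q / (n:ℝ))) := by ring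
        _ = M * (b - a) * (C' * (n:ℝ) ^ (q - 1)) := by
            rw [rpow_sub hn', rpow_one]
    have hAeq : S n - A n = (∑ k ∈ Finset.Icc 1 m, (f (a + (k : ℝ) / n * (b - a)) * ((b - a) / n)
          - f (a + (k : ℝ) / n * (b - a)) * ((b - a) / (n + d n k))))
        + ∑ k ∈ Finset.Ioc m n, f (a + (k : ℝ) / n * (b - a)) * ((b - a) / n) := by
      rw [hsplit, Finset.sum_sub_distrib, hA]
      ring
    constructor
    · rw [hAeq]
      apply add_nonneg
      · exact Finset.sum_nonneg fun k hk => (hterm k hk).1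
      · apply Finset.sum_nonneg
        intro k hk
        obtain ⟨hk1, hk2⟩ := Finset.mem_Ioc.1 hk
        have hkmem : k ∈ Finset.Icc 1 n := Finset.mem_Icc.2 ⟨le_trans (Nat.succ_le_succ (Nat.zero_le m)) hk1, hk2⟩
        exact mul_nonneg (hfmem k hkmem).1 (by positivity)
    · rw [hAeq, mul_add]
      exact add_le_add hB1 hB2
  -- the error tends to zero
  have h1 : Tendsto (fun n : ℕ => (n:ℝ) ^ (p - 1)) atTop (nhds 0) := by
    have := (tendsto_rpow_neg_atTop (by linarith : 0 < 1 - p)).comp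
      (tendsto_natCast_atTop_atTop (R := ℝ))
    simpa [Function.comp_def, neg_sub] using this
  have h2 : Tendsto (fun n : ℕ => (n:ℝ) ^ (q - 1)) atTop (nhds 0) := by
    have := (tendsto_rpow_neg_atTop (by linarith : 0 < 1 - q)).comp
      (tendsto_natCast_atTop_atTop (R := ℝ))
    simpa [Function.comp_def, neg_sub] using this
  have he : Tendsto (fun n : ℕ => M * (b - a) * (C * (n:ℝ) ^ (p - 1) + C' * (n:ℝ) ^ (q - 1)))
      atTop (nhds 0) := by
    have := ((h1.const_mul C).add (h2.const_mul C')).const_mul (M * (b - a))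
    simpa using this
  have hd0' : Tendsto (fun n => S n - A n) atTop (nhds 0) := by
    apply squeeze_zero' (Filter.eventually_atTop.2 ⟨1, fun n hn => (key n hn).1⟩)
      (Filter.eventually_atTop.2 ⟨1, fun n hn => (key n hn).2⟩) he
  have := hS.sub hd0'
  simpa using this
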